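/- arXiv:1406.7160 — 3 statements merged into one kernel-verified Lean document; each statement's English description precedes it below -/
import Mathlib

section
/- If S1 ⊆ S2 are sub-sigma-algebras and x is a square-integrable random variable with values in a separable Hilbert space, then Cov(E[x|S1], E[x|S1]) ≤ Cov(E[x|S2], E[x|S2]) ≤ Cov(x, x) in the operator order (equivalently, ⟨e, Cov(E[x|S1])e⟩ ≤ ⟨e, Cov(E[x|S2])e⟩ ≤ ⟨e, Cov(x)e⟩ for every e). -/
open MeasureTheory
open scoped RealInnerProductSpace

/-- The covariance quadratic form of a Hilbert-space valued random variable: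
`e ↦ ⟨e, Cov(x) e⟩ = E ⟨x - E x, e⟩²`. -/
noncomputable def covQuad {Ω H : Type*} [MeasurableSpace Ω]
    [NormedAddCommGroup H] [InnerProductSpace ℝ H] [CompleteSpace H]
    (P : Measure Ω) (x : Ω → H) (e : H) : ℝ :=
  ∫ ω, ⟪x ω - ∫ ω', x ω' ∂P, e⟫ ^ 2 ∂P

section Aux

variable {Ω : Type*} {m m0 : MeasurableSpace Ω} {P : Measure Ω} [IsProbabilityMeasure P]

/-- The conditional expectation of an `L²` function is in `L²`. -/
lemma memℒp_two_condexp (hm : m ≤ m0) {f : Ω → ℝ} (hf : MemLp f 2 P) :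
    MemLp (P[f|m]) 2 P := by
  have hfi : Integrable f P := hf.integrable one_le_two
  set F : Lp ℝ 2 P := hf.toLp f with hF
  have heq : (((condExpL2 ℝ ℝ hm F : lpMeas ℝ ℝ m 2 P) : Lp ℝ 2 P) : Ω → ℝ) =ᵐ[P] P[f|m] := by
    refine ae_eq_condExp_of_forall_setIntegral_eq hm hfi ?_ ?_ ?_
    · intro s _ hμs
      exact integrableOn_Lp_of_measure_ne_top _ fact_one_le_two_ennreal.elim hμs.ne
    · intro s hs hμs
      rw [integral_condExpL2_eq hm F hs hμs.ne]
      exact setIntegral_congr_ae (hm s hs) ((hf.coeFn_toLp).mono fun x hx _ => hx)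
    · exact lpMeas.aestronglyMeasurable _
  exact MemLp.ae_eq heq (Lp.memLp _)

/-- `L²` contraction property of conditional expectation. -/
lemma integral_sq_condexp_le (hm : m ≤ m0) {f : Ω → ℝ} (hf : MemLp f 2 P) :
    ∫ ω, (P[f|m]) ω ^ 2 ∂P ≤ ∫ ω, f ω ^ 2 ∂P := by
  have hg2 : MemLp (P[f|m]) 2 P := memℒp_two_condexp hm hf
  set g : Ω → ℝ := P[f|m] with hgdef
  have hfi : Integrable f P := hf.integrable one_le_two
  have hgi : Integrable g P := integrable_condExp
  have hfg2 : MemLp (f - g) 2 P := hf.sub hg2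
  have hmul : Integrable (fun ω => g ω * (f ω - g ω)) P := by
    have h := MemLp.smul (E := ℝ) (𝕜 := ℝ) (p := 2) (q := 2) (r := 1) hfg2 hg2
      (hpqr := ⟨by rw [inv_one]; exact ENNReal.inv_two_add_inv_two⟩)
    have := memLp_one_iff_integrable.mp h
    exact this
  -- conditional expectation of f - g is 0
  have hcsub : P[f - g|m] =ᵐ[P] 0 := by
    have h1 : P[f - g|m] =ᵐ[P] P[f|m] - P[g|m] := condExp_sub hfi hgi m
    have h2 : P[g|m] =ᵐ[P] P[f|m] := condExp_condExp_of_le le_rfl hm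
    filter_upwards [h1, h2] with ω h1 h2
    simp [h1, h2]
  -- cross term vanishes
  have hcross : ∫ ω, g ω * (f ω - g ω) ∂P = 0 := by
    have hgm : AEStronglyMeasurable[m] g P :=
      StronglyMeasurable.aestronglyMeasurable stronglyMeasurable_condExp
    have hpull : P[fun ω => g ω * (f ω - g ω)|m] =ᵐ[P] g * P[f - g|m] :=
      condExp_mul_of_aestronglyMeasurable_left hgm
        (show Integrable (g * (f - g)) P from hmul) (hfi.sub hgi)
    have h0 : P[fun ω => g ω * (f ω - g ω)|m] =ᵐ[P] 0 := by
      filter_upwards [hpull, hcsub] with ω h1 h2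
      simp [h1, Pi.mul_apply, h2]
    calc ∫ ω, g ω * (f ω - g ω) ∂P
        = ∫ ω, (P[fun ω => g ω * (f ω - g ω)|m]) ω ∂P := (integral_condExp hm).symm
      _ = ∫ ω, (0 : ℝ) ∂P := by
          refine integral_congr_ae (h0.mono fun ω hω => ?_)
          simpa using hω
      _ = 0 := by simp
  have hdiff : Integrable (fun ω => (f ω - g ω) ^ 2) P := by
    simpa [Pi.sub_apply] using hfg2.integrable_sq
  have hid : ∀ ω, f ω ^ 2 = (f ω - g ω) ^ 2 + 2 * (g ω * (f ω - g ω)) + g ω ^ 2 := by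
    intro ω; ring
  have hmul2 : Integrable (fun ω => 2 * (g ω * (f ω - g ω))) P := hmul.const_mul 2
  have hsum : Integrable (fun ω => (f ω - g ω) ^ 2 + 2 * (g ω * (f ω - g ω))) P :=
    hdiff.add hmul2
  have hint : ∫ ω, f ω ^ 2 ∂P
      = ∫ ω, (f ω - g ω) ^ 2 ∂P + 2 * ∫ ω, g ω * (f ω - g ω) ∂P + ∫ ω, g ω ^ 2 ∂P := by
    simp_rw [hid]
    rw [integral_add hsum hg2.integrable_sq, integral_add hdiff hmul2, integral_const_mul]
  have hnn : 0 ≤ ∫ ω, (f ω - g ω) ^ 2 ∂P := integral_nonneg fun ω => sq_nonneg _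
  rw [hint, hcross]
  linarith

/-- Variance of conditional expectation is at most the variance. -/
lemma var_condexp_le (hm : m ≤ m0) {f : Ω → ℝ} (hf : MemLp f 2 P) :
    ∫ ω, ((P[f|m]) ω - ∫ ω', (P[f|m]) ω' ∂P) ^ 2 ∂P
      ≤ ∫ ω, (f ω - ∫ ω', f ω' ∂P) ^ 2 ∂P := by
  have hfi : Integrable f P := hf.integrable one_le_two
  set c : ℝ := ∫ ω', f ω' ∂P with hc
  have hmean : ∫ ω', (P[f|m]) ω' ∂P = c := integral_condExp hm
  have hfc : MemLp (fun ω => f ω - c) 2 P := hf.sub (memLp_const c)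
  have hcsub : P[fun ω => f ω - c|m] =ᵐ[P] fun ω => (P[f|m]) ω - c := by
    have h1 : P[f - (fun _ => c)|m] =ᵐ[P] P[f|m] - P[fun _ : Ω => c|m] :=
      condExp_sub hfi (integrable_const c) m
    have h2 : P[fun _ : Ω => c|m] = fun _ => c := condExp_const hm c
    filter_upwards [h1] with ω h1
    have : (P[fun ω => f ω - c|m]) ω = (P[f - (fun _ => c)|m]) ω := rfl
    rw [this, h1, h2]
    simp
  have key := integral_sq_condexp_le hm hfc
  calc ∫ ω, ((P[f|m]) ω - ∫ ω', (P[f|m]) ω' ∂P) ^ 2 ∂P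
      = ∫ ω, (P[fun ω => f ω - c|m]) ω ^ 2 ∂P := by
        rw [hmean]
        exact (integral_congr_ae (hcsub.mono fun ω h => by rw [h])).symm
    _ ≤ ∫ ω, (f ω - c) ^ 2 ∂P := key
    _ = ∫ ω, (f ω - ∫ ω', f ω' ∂P) ^ 2 ∂P := rfl

/-- Variance only depends on the a.e. equivalence class. -/
lemma var_congr {f g : Ω → ℝ} (h : f =ᵐ[P] g) :
    ∫ ω, (f ω - ∫ ω', f ω' ∂P) ^ 2 ∂P = ∫ ω, (g ω - ∫ ω', g ω' ∂P) ^ 2 ∂P := by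
  have hmean : ∫ ω', f ω' ∂P = ∫ ω', g ω' ∂P := integral_congr_ae h
  rw [hmean]
  exact integral_congr_ae (h.mono fun ω hω => by simp [hω])

variable {H : Type*} [NormedAddCommGroup H] [InnerProductSpace ℝ H] [CompleteSpace H]

/-- Conditional expectation commutes with the inner product with a fixed vector. -/
lemma condexp_inner_const (hm : m ≤ m0) {x : Ω → H} (hxi : Integrable x P) (e : H) :
    (fun ω => ⟪(P[x|m]) ω, e⟫) =ᵐ[P] P[fun ω => ⟪x ω, e⟫|m] := by
  refine ae_eq_condExp_of_forall_setIntegral_eq hm (hxi.inner_const e) ?_ ?_ ?_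
  · intro s _ _
    exact (integrable_condExp.inner_const e).integrableOn
  · intro s hs hμs
    have h1 : ∫ ω in s, ⟪(P[x|m]) ω, e⟫ ∂P = ⟪e, ∫ ω in s, (P[x|m]) ω ∂P⟫ := by
      rw [← integral_inner (integrable_condExp.integrableOn (s := s)) e]
      exact integral_congr_ae (Filter.Eventually.of_forall fun ω => real_inner_comm _ _)
    have h2 : ∫ ω in s, ⟪x ω, e⟫ ∂P = ⟪e, ∫ ω in s, x ω ∂P⟫ := by
      rw [← integral_inner (hxi.integrableOn (s := s)) e]
      exact integral_congr_ae (Filter.Eventually.of_forall fun ω => real_inner_comm _ _)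
    rw [h1, h2, setIntegral_condExp hm hxi hs]
  · exact (stronglyMeasurable_condExp.inner stronglyMeasurable_const).aestronglyMeasurable

/-- `covQuad` is the variance of the inner product with `e`. -/
lemma covQuad_eq_var (x : Ω → H) (hxi : Integrable x P) (e : H) :
    covQuad P x e = ∫ ω, (⟪x ω, e⟫ - ∫ ω', ⟪x ω', e⟫ ∂P) ^ 2 ∂P := by
  unfold covQuad
  have h : ∫ ω', ⟪x ω', e⟫ ∂P = ⟪∫ ω', x ω' ∂P, e⟫ := by
    rw [real_inner_comm e (∫ ω', x ω' ∂P), ← integral_inner hxi e]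
    exact integral_congr_ae (Filter.Eventually.of_forall fun ω => real_inner_comm _ _)
  rw [h]
  congr 1
  funext ω
  rw [inner_sub_left]

end Aux

/-- If `S1 ⊆ S2` are sub-sigma-algebras and `x` is square-integrable with
values in a separable Hilbert space, then
`Cov(E[x|S1]) ≤ Cov(E[x|S2]) ≤ Cov(x)` in the operator (Loewner) order, i.e.
the covariance quadratic forms are ordered at every direction `e`. -/
theorem covariance_condexp_monotone {Ω H : Type*}
    {m1 m2 m0 : MeasurableSpace Ω} (P : @MeasureTheory.Measure Ω m0)
    [IsProbabilityMeasure P]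
    [NormedAddCommGroup H] [InnerProductSpace ℝ H] [CompleteSpace H]
    [SecondCountableTopology H]
    (h12 : m1 ≤ m2) (h20 : m2 ≤ m0)
    (x : Ω → H) (hx : MemLp x 2 P) :
    ∀ e : H,
      covQuad P (MeasureTheory.condExp m1 P x) e ≤
          covQuad P (MeasureTheory.condExp m2 P x) e ∧
        covQuad P (MeasureTheory.condExp m2 P x) e ≤ covQuad P x e := by
  intro e
  have h10 : m1 ≤ m0 := h12.trans h20
  have hxi : Integrable x P := hx.integrable one_le_two
  set f : Ω → ℝ := fun ω => ⟪x ω, e⟫ with hf_def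
  have hf : MemLp f 2 P := hx.inner_const e
  have hfi : Integrable f P := hf.integrable one_le_two
  -- express the three covQuads as variances of real functions
  have e1 : covQuad P (P[x|m1]) e
      = ∫ ω, ((P[f|m1]) ω - ∫ ω', (P[f|m1]) ω' ∂P) ^ 2 ∂P := by
    rw [covQuad_eq_var _ integrable_condExp]
    exact var_congr (condexp_inner_const h10 hxi e)
  have e2 : covQuad P (P[x|m2]) e
      = ∫ ω, ((P[f|m2]) ω - ∫ ω', (P[f|m2]) ω' ∂P) ^ 2 ∂P := by
    rw [covQuad_eq_var _ integrable_condExp]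
    exact var_congr (condexp_inner_const h20 hxi e)
  have e0 : covQuad P x e = ∫ ω, (f ω - ∫ ω', f ω' ∂P) ^ 2 ∂P :=
    covQuad_eq_var x hxi e
  constructor
  · rw [e1, e2]
    have htower : P[f|m1] =ᵐ[P] P[P[f|m2]|m1] := (condExp_condExp_of_le h12 h20).symm
    calc ∫ ω, ((P[f|m1]) ω - ∫ ω', (P[f|m1]) ω' ∂P) ^ 2 ∂P
        = ∫ ω, ((P[P[f|m2]|m1]) ω - ∫ ω', (P[P[f|m2]|m1]) ω' ∂P) ^ 2 ∂P :=
          var_congr htower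
      _ ≤ ∫ ω, ((P[f|m2]) ω - ∫ ω', (P[f|m2]) ω' ∂P) ^ 2 ∂P :=
          var_condexp_le h10 (memℒp_two_condexp h20 hf)
  · rw [e2, e0]
    exact var_condexp_le h20 hf
end

section
/- Monotonicity of the Riccati difference equation: let P_k^{(1)} and P_k^{(2)} satisfy the Riccati recursions P̃_k^{(j)} = A P_{k−1}^{(j)} A* + W_k^{(j)}, P_k^{(j)} = P̃_k^{(j)} − P̃_k^{(j)} C* (C P̃_k^{(j)} C* + R)⁻¹ C P̃_k^{(j)}. If 0 ≤ P_0^{(1)} ≤ P_0^{(2)} and 0 ≤ W_k^{(1)} ≤ W_k^{(2)} for all k, then P_k^{(1)} ≤ P_k^{(2)} for all k ≥ 0. -/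
open ContinuousLinearMap
open scoped RealInnerProductSpace

/-- The Riccati update map `P̃ ↦ P̃ - P̃ C* (C P̃ C* + R)⁻¹ C P̃`. -/
noncomputable def riccatiUpdate {X : Type*} [NormedAddCommGroup X]
    [InnerProductSpace ℝ X] [CompleteSpace X] {m : ℕ}
    (C : X →L[ℝ] EuclideanSpace ℝ (Fin m))
    (R : EuclideanSpace ℝ (Fin m) →L[ℝ] EuclideanSpace ℝ (Fin m))
    (Pt : X →L[ℝ] X) : X →L[ℝ] X :=
  Pt - Pt ∘L adjoint C ∘L Ring.inverse (C ∘L Pt ∘L adjoint C + R) ∘L C ∘L Pt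

section aux

variable {X : Type*} [NormedAddCommGroup X] [InnerProductSpace ℝ X] [CompleteSpace X] {m : ℕ}

lemma sa_adjoint_eq {Y : Type*} [NormedAddCommGroup Y] [InnerProductSpace ℝ Y] [CompleteSpace Y]
    {T : Y →L[ℝ] Y} (h : IsSelfAdjoint T) : adjoint T = T :=
  (ContinuousLinearMap.isSelfAdjoint_iff').mp h

lemma sa_inner {Y : Type*} [NormedAddCommGroup Y] [InnerProductSpace ℝ Y] [CompleteSpace Y]
    {T : Y →L[ℝ] Y} (h : IsSelfAdjoint T) (x y : Y) : ⟪T x, y⟫ = ⟪x, T y⟫ := by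
  conv_lhs => rw [← sa_adjoint_eq h]
  exact adjoint_inner_left T y x

set_option maxHeartbeats 1000000 in
lemma riccati_key (C : X →L[ℝ] EuclideanSpace ℝ (Fin m))
    (R : EuclideanSpace ℝ (Fin m) →L[ℝ] EuclideanSpace ℝ (Fin m))
    (hRsa : IsSelfAdjoint R)
    (hRpos : ∀ y : EuclideanSpace ℝ (Fin m), y ≠ 0 → 0 < ⟪y, R y⟫)
    (Pt : X →L[ℝ] X) (hsa : IsSelfAdjoint Pt) (hpsd : ∀ x, 0 ≤ ⟪x, Pt x⟫) :
    IsSelfAdjoint (riccatiUpdate C R Pt) ∧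
    ∀ v : X,
      (∀ u, ⟪v, riccatiUpdate C R Pt v⟫ ≤
        ⟪v - adjoint C u, Pt (v - adjoint C u)⟫ + ⟪u, R u⟫) ∧
      (∃ u, ⟪v, riccatiUpdate C R Pt v⟫ =
        ⟪v - adjoint C u, Pt (v - adjoint C u)⟫ + ⟪u, R u⟫) := by
  have hRpsd : ∀ y, 0 ≤ ⟪y, R y⟫ := by
    intro y
    by_cases h : y = 0
    · simp [h]
    · exact (hRpos y h).le
  set S : EuclideanSpace ℝ (Fin m) →L[ℝ] EuclideanSpace ℝ (Fin m) :=
    C ∘L Pt ∘L adjoint C + R with hSdef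
  have hP := sa_inner hsa
  -- quadratic form of S
  have hSapp : ∀ y, S y = C (Pt (adjoint C y)) + R y := fun y => rfl
  have hSquad : ∀ y, ⟪y, S y⟫ = ⟪adjoint C y, Pt (adjoint C y)⟫ + ⟪y, R y⟫ := by
    intro y
    rw [hSapp, inner_add_right]
    congr 1
    exact (adjoint_inner_left C (Pt (adjoint C y)) y).symm
  have hSpsd : ∀ y, 0 ≤ ⟪y, S y⟫ := fun y => by
    rw [hSquad]; exact add_nonneg (hpsd _) (hRpsd y)
  have hSpos : ∀ y, y ≠ 0 → 0 < ⟪y, S y⟫ := fun y hy => by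
    rw [hSquad]; exact add_pos_of_nonneg_of_pos (hpsd _) (hRpos y hy)
  -- S is self-adjoint
  have hSsa : IsSelfAdjoint S := by
    rw [ContinuousLinearMap.isSelfAdjoint_iff']
    simp only [hSdef, map_add, adjoint_comp, adjoint_adjoint, sa_adjoint_eq hsa,
      sa_adjoint_eq hRsa, ContinuousLinearMap.comp_assoc]
  -- S is invertible
  have hSinj : Function.Injective S := by
    intro a b hab
    rw [← sub_eq_zero]
    by_contra h
    have := hSpos (a - b) h
    rw [map_sub, hab, sub_self, inner_zero_right] at this
    exact lt_irrefl 0 this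
  have hSsurj : Function.Surjective S := by
    have := LinearMap.injective_iff_surjective (f := (S : EuclideanSpace ℝ (Fin m) →ₗ[ℝ] EuclideanSpace ℝ (Fin m)))
    exact this.mp hSinj
  set e := ContinuousLinearEquiv.ofBijective S (LinearMap.ker_eq_bot_of_injective hSinj)
      (LinearMap.range_eq_top.mpr hSsurj) with hedef
  have hecoe : (e : EuclideanSpace ℝ (Fin m) →L[ℝ] EuclideanSpace ℝ (Fin m)) = S :=
    ContinuousLinearEquiv.coe_ofBijective _ _ _
  set T : EuclideanSpace ℝ (Fin m) →L[ℝ] EuclideanSpace ℝ (Fin m) := (↑e.symm : EuclideanSpace ℝ (Fin m) →L[ℝ] EuclideanSpace ℝ (Fin m)) with hTdef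
  have h1 : S ∘L T = 1 := by
    ext y
    have : S (e.symm y) = e (e.symm y) := by
      rw [← hecoe]; rfl
    simp [hTdef, ContinuousLinearMap.comp_apply, this]
  have h2 : T ∘L S = 1 := by
    ext y
    have : S y = e y := by rw [← hecoe]; rfl
    simp [hTdef, ContinuousLinearMap.comp_apply, this]
  have hinv : Ring.inverse S = T := by
    have hu : Ring.inverse ((⟨S, T, by rw [ContinuousLinearMap.mul_def]; exact h1,
        by rw [ContinuousLinearMap.mul_def]; exact h2⟩ :
        (EuclideanSpace ℝ (Fin m) →L[ℝ] EuclideanSpace ℝ (Fin m))ˣ) :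
        EuclideanSpace ℝ (Fin m) →L[ℝ] EuclideanSpace ℝ (Fin m)) = T := Ring.inverse_unit _
    exact hu
  have hTsa : adjoint T = T := by
    have hTS : adjoint T ∘L S = 1 := by
      calc adjoint T ∘L S = adjoint T ∘L adjoint S := by rw [sa_adjoint_eq hSsa]
        _ = adjoint (S ∘L T) := (adjoint_comp S T).symm
        _ = 1 := by rw [h1]; simp [ContinuousLinearMap.one_def, ContinuousLinearMap.adjoint_id]
    calc adjoint T = adjoint T ∘L (S ∘L T) := by rw [h1]; rfl
      _ = (adjoint T ∘L S) ∘L T := by rw [ContinuousLinearMap.comp_assoc]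
      _ = T := by rw [hTS]; ext y; rfl
  have hSip := sa_inner hSsa
  constructor
  · -- self-adjointness of the update
    rw [ContinuousLinearMap.isSelfAdjoint_iff']
    rw [riccatiUpdate]
    rw [← hSdef, hinv]
    simp only [map_sub, adjoint_comp, adjoint_adjoint, sa_adjoint_eq hsa, hTsa,
      ContinuousLinearMap.comp_assoc]
  · intro v
    set w : X := Pt v with hw
    set c : EuclideanSpace ℝ (Fin m) := C w with hc
    set u₀ : EuclideanSpace ℝ (Fin m) := T c with hu₀
    have hSu₀ : S u₀ = c := by
      have := congrArg (fun f : EuclideanSpace ℝ (Fin m) →L[ℝ] EuclideanSpace ℝ (Fin m) => f c) h1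
      simpa [ContinuousLinearMap.comp_apply] using this
    have hUval : riccatiUpdate C R Pt v = w - Pt (adjoint C u₀) := by
      rw [riccatiUpdate, ← hSdef, hinv]
      simp [ContinuousLinearMap.sub_apply, ContinuousLinearMap.comp_apply, hw, hc, hu₀]
    have e1 : ∀ u, ⟪v, Pt (adjoint C u)⟫ = ⟪c, u⟫ := by
      intro u
      rw [← hP, ← hw, hc]
      exact adjoint_inner_right C w u  -- check
    have hUquad : ⟪v, riccatiUpdate C R Pt v⟫ = ⟪v, w⟫ - ⟪c, u₀⟫ := by
      rw [hUval, inner_sub_right, e1]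
    have hgquad : ∀ u, ⟪v - adjoint C u, Pt (v - adjoint C u)⟫ + ⟪u, R u⟫
        = ⟪v, w⟫ - 2 * ⟪c, u⟫ + ⟪u, S u⟫ := by
      intro u
      have e2 : ⟪adjoint C u, Pt v⟫ = ⟪c, u⟫ := by
        rw [real_inner_comm, hP]; exact e1 u
      have e3 := hSquad u
      rw [map_sub, inner_sub_left, inner_sub_right, inner_sub_right, e1, e2, ← hw]
      have e4 : ⟪adjoint C u, Pt (adjoint C u)⟫ = ⟪u, S u⟫ - ⟪u, R u⟫ := by
        rw [e3]; ring
      rw [e4]; ring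
    have hcS : ∀ u, ⟪c, u⟫ = ⟪u₀, S u⟫ := by
      intro u
      rw [← hSu₀]; exact hSip u₀ u
    have hcu₀ : ⟪c, u₀⟫ = ⟪u₀, S u₀⟫ := hcS u₀
    constructor
    · intro u
      rw [hUquad, hgquad]
      have hpos := hSpsd (u - u₀)
      have expand : ⟪u - u₀, S (u - u₀)⟫ = ⟪u, S u⟫ - 2 * ⟪c, u⟫ + ⟪c, u₀⟫ := by
        rw [map_sub, inner_sub_left, inner_sub_right, inner_sub_right]
        have a1 : ⟪u, S u₀⟫ = ⟪c, u⟫ := by rw [hSu₀]; exact real_inner_comm c u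
        have a2 : ⟪u₀, S u⟫ = ⟪c, u⟫ := (hcS u).symm
        rw [a1, a2, ← hcu₀]; ring
      rw [expand] at hpos
      linarith
    · exact ⟨u₀, by rw [hUquad, hgquad, ← hcu₀]; ring⟩

end aux

/-- Monotonicity of the Riccati difference equation: if two Riccati recursions
`P_k^{(j)} = riccatiUpdate C R (A P_{k-1}^{(j)} A* + W_k^{(j)})` start with
`0 ≤ P_0^{(1)} ≤ P_0^{(2)}` and have `0 ≤ W_k^{(1)} ≤ W_k^{(2)}` for all `k`,
then `P_k^{(1)} ≤ P_k^{(2)}` (Loewner order) for all `k ≥ 0`. -/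
theorem riccati_difference_monotone {X : Type*} [NormedAddCommGroup X]
    [InnerProductSpace ℝ X] [CompleteSpace X] {m : ℕ}
    (A : X →L[ℝ] X) (C : X →L[ℝ] EuclideanSpace ℝ (Fin m))
    (R : EuclideanSpace ℝ (Fin m) →L[ℝ] EuclideanSpace ℝ (Fin m))
    (hRsa : IsSelfAdjoint R)
    (hRpos : ∀ y : EuclideanSpace ℝ (Fin m), y ≠ 0 → 0 < ⟪y, R y⟫)
    (W1 W2 : ℕ → X →L[ℝ] X)
    (hW1sa : ∀ k, IsSelfAdjoint (W1 k)) (hW2sa : ∀ k, IsSelfAdjoint (W2 k))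
    (hW1pos : ∀ k (v : X), 0 ≤ ⟪v, W1 k v⟫)
    (hWle : ∀ k (v : X), ⟪v, W1 k v⟫ ≤ ⟪v, W2 k v⟫)
    (P1 P2 : ℕ → X →L[ℝ] X)
    (hP10sa : IsSelfAdjoint (P1 0)) (hP20sa : IsSelfAdjoint (P2 0))
    (hP10pos : ∀ v : X, 0 ≤ ⟪v, P1 0 v⟫)
    (hP0le : ∀ v : X, ⟪v, P1 0 v⟫ ≤ ⟪v, P2 0 v⟫)
    (hrec1 : ∀ k, P1 (k + 1) = riccatiUpdate C R (A ∘L P1 k ∘L adjoint A + W1 (k + 1)))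
    (hrec2 : ∀ k, P2 (k + 1) = riccatiUpdate C R (A ∘L P2 k ∘L adjoint A + W2 (k + 1))) :
    ∀ k, ∀ v : X, ⟪v, P1 k v⟫ ≤ ⟪v, P2 k v⟫ := by
  have hRpsd : ∀ y, 0 ≤ ⟪y, R y⟫ := by
    intro y
    by_cases h : y = 0
    · simp [h]
    · exact (hRpos y h).le
  suffices H : ∀ k, IsSelfAdjoint (P1 k) ∧ IsSelfAdjoint (P2 k) ∧
      (∀ v, 0 ≤ ⟪v, P1 k v⟫) ∧ (∀ v, ⟪v, P1 k v⟫ ≤ ⟪v, P2 k v⟫) from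
    fun k => (H k).2.2.2
  intro k
  induction k with
  | zero => exact ⟨hP10sa, hP20sa, hP10pos, hP0le⟩
  | succ k ih =>
    obtain ⟨h1sa, h2sa, h1pos, hle⟩ := ih
    set Q1 : X →L[ℝ] X := A ∘L P1 k ∘L adjoint A + W1 (k + 1) with hQ1def
    set Q2 : X →L[ℝ] X := A ∘L P2 k ∘L adjoint A + W2 (k + 1) with hQ2def
    have hconj : ∀ (P : X →L[ℝ] X) (W : X →L[ℝ] X) (x : X),
        (A ∘L P ∘L adjoint A + W) x = A (P (adjoint A x)) + W x := fun _ _ _ => rfl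
    have hquad : ∀ (P W : X →L[ℝ] X) (x : X),
        ⟪x, (A ∘L P ∘L adjoint A + W) x⟫ = ⟪adjoint A x, P (adjoint A x)⟫ + ⟪x, W x⟫ := by
      intro P W x
      rw [hconj, inner_add_right]
      congr 1
      exact (adjoint_inner_left A (P (adjoint A x)) x).symm
    have hQsa : ∀ (P W : X →L[ℝ] X), IsSelfAdjoint P → IsSelfAdjoint W →
        IsSelfAdjoint (A ∘L P ∘L adjoint A + W) := by
      intro P W hP hW
      rw [ContinuousLinearMap.isSelfAdjoint_iff']
      simp only [map_add, adjoint_comp, adjoint_adjoint, sa_adjoint_eq hP,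
        sa_adjoint_eq hW, ContinuousLinearMap.comp_assoc]
    have hQ1sa : IsSelfAdjoint Q1 := hQsa _ _ h1sa (hW1sa (k + 1))
    have hQ2sa : IsSelfAdjoint Q2 := hQsa _ _ h2sa (hW2sa (k + 1))
    have hQ1pos : ∀ x, 0 ≤ ⟪x, Q1 x⟫ := by
      intro x
      rw [hQ1def, hquad]
      exact add_nonneg (h1pos _) (hW1pos (k + 1) x)
    have hQle : ∀ x, ⟪x, Q1 x⟫ ≤ ⟪x, Q2 x⟫ := by
      intro x
      rw [hQ1def, hQ2def, hquad, hquad]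
      exact add_le_add (hle _) (hWle (k + 1) x)
    have hQ2pos : ∀ x, 0 ≤ ⟪x, Q2 x⟫ := fun x => le_trans (hQ1pos x) (hQle x)
    obtain ⟨hU1sa, hkey1⟩ := riccati_key C R hRsa hRpos Q1 hQ1sa hQ1pos
    obtain ⟨hU2sa, hkey2⟩ := riccati_key C R hRsa hRpos Q2 hQ2sa hQ2pos
    rw [hrec1 k, hrec2 k, ← hQ1def, ← hQ2def]
    refine ⟨hU1sa, hU2sa, ?_, ?_⟩
    · intro v
      obtain ⟨u, hu⟩ := (hkey1 v).2
      rw [hu]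
      exact add_nonneg (hQ1pos _) (hRpsd u)
    · intro v
      obtain ⟨u, hu⟩ := (hkey2 v).2
      calc ⟪v, riccatiUpdate C R Q1 v⟫
          ≤ ⟪v - adjoint C u, Q1 (v - adjoint C u)⟫ + ⟪u, R u⟫ := (hkey1 v).1 u
        _ ≤ ⟪v - adjoint C u, Q2 (v - adjoint C u)⟫ + ⟪u, R u⟫ := by
            have := hQle (v - adjoint C u); linarith
        _ = ⟪v, riccatiUpdate C R Q2 v⟫ := hu.symm
end

section
/- Dominated convergence of traces: if P, S, and P_k (k ∈ ℕ) are positive semidefinite trace-class self-adjoint operators on a separable Hilbert space with P_k ≤ S for all k and P_k → P in the weak operator topology, then tr(P_k) → tr(P). -/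
open Filter ContinuousLinearMap
open scoped RealInnerProductSpace Topology

/-- Dominated convergence of traces: if positive semidefinite trace-class
self-adjoint operators `P_k` satisfy `P_k ≤ S` (Loewner order) for a trace-class
`S` and `P_k → P` in the weak operator topology, then `tr(P_k) → tr(P)`.
The trace is expressed as the sum of diagonal entries in a Hilbert basis. -/
theorem trace_dominated_convergence {X : Type*} [NormedAddCommGroup X]
    [InnerProductSpace ℝ X] [CompleteSpace X]
    (b : HilbertBasis ℕ ℝ X)
    (P S : X →L[ℝ] X) (Pk : ℕ → X →L[ℝ] X)
    (hPsa : IsSelfAdjoint P) (hSsa : IsSelfAdjoint S)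
    (hPksa : ∀ k, IsSelfAdjoint (Pk k))
    (hPpos : ∀ v : X, 0 ≤ ⟪v, P v⟫)
    (hPkpos : ∀ k (v : X), 0 ≤ ⟪v, Pk k v⟫)
    (hStr : Summable fun n => ⟪b n, S (b n)⟫)
    (hPtr : Summable fun n => ⟪b n, P (b n)⟫)
    (hPktr : ∀ k, Summable fun n => ⟪b n, Pk k (b n)⟫)
    (hle : ∀ k (v : X), ⟪v, Pk k v⟫ ≤ ⟪v, S v⟫)
    (hweak : ∀ x y : X, Tendsto (fun k => ⟪x, Pk k y⟫) atTop (𝓝 ⟪x, P y⟫)) :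
    Tendsto (fun k => ∑' n, ⟪b n, Pk k (b n)⟫) atTop (𝓝 (∑' n, ⟪b n, P (b n)⟫)) := by
  refine tendsto_tsum_of_dominated_convergence (bound := fun n => ⟪b n, S (b n)⟫) hStr
    (fun n => hweak (b n) (b n)) (Eventually.of_forall fun k n => ?_)
  rw [Real.norm_eq_abs, abs_of_nonneg (hPkpos k (b n))]
  exact hle k (b n)
end
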